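/- Every strict finite normal-form game that admits an ordinal potential has a pure Nash equilibrium. -/
import Mathlib

/-- Two distinct profiles are `i`-comparable if they differ only in the strategy of player `i`. -/
def IComp {N : ℕ} {S : Fin N → Type*} (i : Fin N) (p q : ∀ j, S j) : Prop :=
  p ≠ q ∧ ∀ j, j ≠ i → p j = q j

/-- A game is strict if `i`-comparable profiles never give player `i` equal payoff. -/
def StrictGame {N : ℕ} {S : Fin N → Type*} (u : Fin N → (∀ j, S j) → ℝ) : Prop :=
  ∀ i p q, IComp i p q → u i p ≠ u i q

/-- An ordinal potential for a game. -/
def IsOrdinalPotential {N : ℕ} {S : Fin N → Type*} (u : Fin N → (∀ j, S j) → ℝ)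
    (P : (∀ j, S j) → ℝ) : Prop :=
  ∀ i p q, IComp i p q → (u i p < u i q ↔ P p < P q)

/-- Pure Nash equilibrium. -/
def IsPNE {N : ℕ} {S : Fin N → Type*} (u : Fin N → (∀ j, S j) → ℝ) (p : ∀ j, S j) : Prop :=
  ∀ i q, IComp i p q → u i q ≤ u i p

/-- Every strict finite game admitting an ordinal potential has a pure Nash equilibrium. -/
theorem ordinal_potential_game_has_pne {N : ℕ} {S : Fin N → Type*}
    [∀ i, Fintype (S i)] [∀ i, Nonempty (S i)]
    (u : Fin N → (∀ j, S j) → ℝ) (hu : StrictGame u)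
    (P : (∀ j, S j) → ℝ) (hP : IsOrdinalPotential u P) :
    ∃ p : ∀ j, S j, IsPNE u p := by
  obtain ⟨p, hp⟩ := Finite.exists_max P
  refine ⟨p, fun i q hq => ?_⟩
  by_contra h
  exact absurd ((hP i p q hq).1 (lt_of_not_ge h)) (not_lt.2 (hp q))
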